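/- Let α, β, γ, δ ∈ ℝ and let W₂ = e^{iα}·R_z(β)·R_y(γ)·R_z(δ). Let p₁, p₂, p₃ ≥ 0 with p₁ + p₂ + p₃ ≤ 1, and define ρ_f = p₁·W₂·|0⟩⟨0|·W₂† + p₂·σx·W₂·|0⟩⟨0|·W₂†·σx + p₃·W₂·σx·|0⟩⟨0|·σx·W₂† + (1−p₁−p₂−p₃)·σx·W₂·σx·|0⟩⟨0|·σx·W₂†·σx. Then tr(ρ_f·P) = (2·cos²(γ/2) − 1)·(1 − 2p₂ − 2p₃). -/
import Mathlib


open Matrix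

noncomputable section

def σx : Matrix (Fin 2) (Fin 2) ℂ := !![0, 1; 1, 0]

/-- The projector |0⟩⟨0|. -/
def P0 : Matrix (Fin 2) (Fin 2) ℂ := !![1, 0; 0, 0]

/-- The projector |1⟩⟨1|. -/
def P1 : Matrix (Fin 2) (Fin 2) ℂ := !![0, 0; 0, 1]

/-- The payoff observable `P = |0⟩⟨0| − |1⟩⟨1|`. -/
def Pobs : Matrix (Fin 2) (Fin 2) ℂ := P0 - P1

/-- The rotation matrix about the y-axis. -/
def Ry (θ : ℝ) : Matrix (Fin 2) (Fin 2) ℂ :=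
  !![(Real.cos (θ / 2) : ℂ), -(Real.sin (θ / 2) : ℂ);
     (Real.sin (θ / 2) : ℂ), (Real.cos (θ / 2) : ℂ)]

/-- The rotation matrix about the z-axis: `R_z(θ) = diag(e^{−iθ/2}, e^{iθ/2})`. -/
def Rz (θ : ℝ) : Matrix (Fin 2) (Fin 2) ℂ :=
  !![Complex.exp (-(θ / 2) * Complex.I), 0; 0, Complex.exp ((θ / 2) * Complex.I)]

lemma exp_I_mul_conj (t : ℝ) :
    (starRingEnd ℂ) (Complex.exp ((t : ℂ) * Complex.I)) = Complex.exp (-(t : ℂ) * Complex.I) := by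
  rw [← Complex.exp_conj]; simp [Complex.conj_I]

lemma expK (t : ℝ) : Complex.exp ((t : ℂ) * Complex.I) * Complex.exp (-(t : ℂ) * Complex.I) = 1 := by
  rw [← Complex.exp_add]; ring_nf; exact Complex.exp_zero

lemma conjT_fin_two (A : Matrix (Fin 2) (Fin 2) ℂ) :
    Aᴴ = !![star (A 0 0), star (A 1 0); star (A 0 1), star (A 1 1)] := by
  ext i j; fin_cases i <;> fin_cases j <;> simp [Matrix.conjTranspose_apply]

lemma Pobs_eq : Pobs = !![1, 0; 0, -1] := by
  rw [Pobs, P0, P1]; ext i j; fin_cases i <;> fin_cases j <;> simp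

def Em (a b d e c s : ℝ) : Matrix (Fin 2) (Fin 2) ℂ :=
  !![Complex.exp ((a : ℂ) * Complex.I) * c, -(Complex.exp ((b : ℂ) * Complex.I) * s);
     Complex.exp ((d : ℂ) * Complex.I) * s, Complex.exp ((e : ℂ) * Complex.I) * c]

lemma U_eq (β γ δ : ℝ) :
    Rz β * Ry γ * Rz δ =
      Em (-(β + δ) / 2) ((δ - β) / 2) ((β - δ) / 2) ((β + δ) / 2)
        (Real.cos (γ / 2)) (Real.sin (γ / 2)) := by
  rw [Rz, Ry, Rz, Em]
  ext i j
  fin_cases i <;> fin_cases j <;>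
    simp [Matrix.mul_apply, Fin.sum_univ_two] <;>
    · rw [mul_right_comm, ← Complex.exp_add]
      congr 2
      push_cast
      ring

lemma tr1 (a b d e c s : ℝ) :
    Matrix.trace (Em a b d e c s * P0 * (Em a b d e c s)ᴴ * Pobs) = (c : ℂ) ^ 2 - (s : ℂ) ^ 2 := by
  rw [Pobs_eq, conjT_fin_two, Em, P0]
  simp only [Matrix.of_apply, Matrix.cons_val', Matrix.cons_val_zero, Matrix.cons_val_one,
    Matrix.head_cons, Matrix.head_fin_const, Matrix.empty_val', Matrix.cons_val_fin_one,
    star_neg, _root_.map_mul, Complex.star_def, exp_I_mul_conj, Complex.conj_ofReal]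
  rw [Matrix.mul_fin_two, Matrix.mul_fin_two, Matrix.mul_fin_two, Matrix.trace_fin_two_of]
  linear_combination (c : ℂ) ^ 2 * expK a - (s : ℂ) ^ 2 * expK d

lemma tr2 (a b d e c s : ℝ) :
    Matrix.trace (σx * Em a b d e c s * P0 * (Em a b d e c s)ᴴ * σx * Pobs)
      = (s : ℂ) ^ 2 - (c : ℂ) ^ 2 := by
  rw [Pobs_eq, conjT_fin_two, Em, P0, σx]
  simp only [Matrix.of_apply, Matrix.cons_val', Matrix.cons_val_zero, Matrix.cons_val_one,
    Matrix.head_cons, Matrix.head_fin_const, Matrix.empty_val', Matrix.cons_val_fin_one,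
    star_neg, _root_.map_mul, Complex.star_def, exp_I_mul_conj, Complex.conj_ofReal]
  rw [Matrix.mul_fin_two, Matrix.mul_fin_two, Matrix.mul_fin_two, Matrix.mul_fin_two,
    Matrix.mul_fin_two, Matrix.trace_fin_two_of]
  linear_combination (s : ℂ) ^ 2 * expK d - (c : ℂ) ^ 2 * expK a

lemma tr3 (a b d e c s : ℝ) :
    Matrix.trace (Em a b d e c s * σx * P0 * σx * (Em a b d e c s)ᴴ * Pobs)
      = (s : ℂ) ^ 2 - (c : ℂ) ^ 2 := by
  rw [Pobs_eq, conjT_fin_two, Em, P0, σx]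
  simp only [Matrix.of_apply, Matrix.cons_val', Matrix.cons_val_zero, Matrix.cons_val_one,
    Matrix.head_cons, Matrix.head_fin_const, Matrix.empty_val', Matrix.cons_val_fin_one,
    star_neg, _root_.map_mul, Complex.star_def, exp_I_mul_conj, Complex.conj_ofReal]
  rw [Matrix.mul_fin_two, Matrix.mul_fin_two, Matrix.mul_fin_two, Matrix.mul_fin_two,
    Matrix.mul_fin_two, Matrix.trace_fin_two_of]
  linear_combination (s : ℂ) ^ 2 * expK b - (c : ℂ) ^ 2 * expK e

lemma tr4 (a b d e c s : ℝ) :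
    Matrix.trace (σx * Em a b d e c s * σx * P0 * σx * (Em a b d e c s)ᴴ * σx * Pobs)
      = (c : ℂ) ^ 2 - (s : ℂ) ^ 2 := by
  rw [Pobs_eq, conjT_fin_two, Em, P0, σx]
  simp only [Matrix.of_apply, Matrix.cons_val', Matrix.cons_val_zero, Matrix.cons_val_one,
    Matrix.head_cons, Matrix.head_fin_const, Matrix.empty_val', Matrix.cons_val_fin_one,
    star_neg, _root_.map_mul, Complex.star_def, exp_I_mul_conj, Complex.conj_ofReal]
  rw [Matrix.mul_fin_two, Matrix.mul_fin_two, Matrix.mul_fin_two, Matrix.mul_fin_two,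
    Matrix.mul_fin_two, Matrix.mul_fin_two, Matrix.mul_fin_two, Matrix.trace_fin_two_of]
  linear_combination (c : ℂ) ^ 2 * expK e - (s : ℂ) ^ 2 * expK b

theorem payoff_against_classical_mixture (α β γ δ : ℝ)
    (W₂ : Matrix (Fin 2) (Fin 2) ℂ)
    (hW₂ : W₂ = Complex.exp ((α : ℂ) * Complex.I) • (Rz β * Ry γ * Rz δ))
    (p₁ p₂ p₃ : ℝ) (h₁ : 0 ≤ p₁) (h₂ : 0 ≤ p₂) (h₃ : 0 ≤ p₃)
    (hsum : p₁ + p₂ + p₃ ≤ 1) :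
    Matrix.trace
      (((p₁ : ℂ) • (W₂ * P0 * W₂ᴴ)
        + (p₂ : ℂ) • (σx * W₂ * P0 * W₂ᴴ * σx)
        + (p₃ : ℂ) • (W₂ * σx * P0 * σx * W₂ᴴ)
        + ((1 - p₁ - p₂ - p₃ : ℝ) : ℂ) • (σx * W₂ * σx * P0 * σx * W₂ᴴ * σx)) * Pobs)
      = (((2 * Real.cos (γ / 2) ^ 2 - 1) * (1 - 2 * p₂ - 2 * p₃) : ℝ) : ℂ) := by
  have hph : star (Complex.exp ((α : ℂ) * Complex.I)) * Complex.exp ((α : ℂ) * Complex.I) = 1 := by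
    rw [Complex.star_def, exp_I_mul_conj, ← Complex.exp_add]
    ring_nf
    exact Complex.exp_zero
  have hph' : Complex.exp ((α : ℂ) * Complex.I) * star (Complex.exp ((α : ℂ) * Complex.I)) = 1 := by
    rw [mul_comm]; exact hph
  set E := Em (-(β + δ) / 2) ((δ - β) / 2) ((β - δ) / 2) ((β + δ) / 2)
        (Real.cos (γ / 2)) (Real.sin (γ / 2)) with hE
  have hW : W₂ = Complex.exp ((α : ℂ) * Complex.I) • E := by rw [hW₂, U_eq]
  have h1 : W₂ * P0 * W₂ᴴ = E * P0 * Eᴴ := by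
    simp only [hW, Matrix.conjTranspose_smul, Matrix.smul_mul, Matrix.mul_smul, smul_smul,
      hph, hph', one_smul]
  have h2 : σx * W₂ * P0 * W₂ᴴ * σx = σx * E * P0 * Eᴴ * σx := by
    simp only [hW, Matrix.conjTranspose_smul, Matrix.smul_mul, Matrix.mul_smul, smul_smul,
      hph, hph', one_smul]
  have h3 : W₂ * σx * P0 * σx * W₂ᴴ = E * σx * P0 * σx * Eᴴ := by
    simp only [hW, Matrix.conjTranspose_smul, Matrix.smul_mul, Matrix.mul_smul, smul_smul,
      hph, hph', one_smul]
  have h4 : σx * W₂ * σx * P0 * σx * W₂ᴴ * σx = σx * E * σx * P0 * σx * Eᴴ * σx := by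
    simp only [hW, Matrix.conjTranspose_smul, Matrix.smul_mul, Matrix.mul_smul, smul_smul,
      hph, hph', one_smul]
  rw [h1, h2, h3, h4]
  simp only [Matrix.add_mul, Matrix.smul_mul, Matrix.trace_add, Matrix.trace_smul, smul_eq_mul]
  rw [tr1, tr2, tr3, tr4]
  have hcs : ((Real.sin (γ / 2) : ℂ)) ^ 2 + ((Real.cos (γ / 2) : ℂ)) ^ 2 = 1 := by
    exact_mod_cast congrArg (Complex.ofReal) (Real.sin_sq_add_cos_sq (γ / 2))
  simp only [Complex.ofReal_sub, Complex.ofReal_one, Complex.ofReal_mul,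
    Complex.ofReal_ofNat, Complex.ofReal_pow]
  linear_combination (2 * (p₂ : ℂ) + 2 * p₃ - 1) * hcs
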